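/- Let w : ℝ → ℝ be a real-valued Schwartz function. Then ∫_ℝ w'(t)·(Hw)(t) dt = 2π ∫_ℝ |τ| |𝓕w(τ)|² dτ = 2π ∫_ℝ |(D^{1/2}w)(t)|² dt. In particular ∫_ℝ w'(t)·(Hw)(t) dt ≥ 0. -/

import Mathlib

open MeasureTheory Filter Complex Real
open scoped FourierTransform Topology RealInnerProductSpace

lemma fourier_mul_flip {f g : ℝ → ℂ} (hf : Integrable f) (hg : Integrable g) :
    ∫ ξ : ℝ, 𝓕 f ξ * g ξ = ∫ x : ℝ, f x * 𝓕 g x := by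
  have := VectorFourier.integral_fourierIntegral_smul_eq_flip (L := innerₗ ℝ)
    Real.continuous_fourierChar continuous_inner hf hg
  simpa [smul_eq_mul, Real.fourier_eq, VectorFourier.fourierIntegral, real_inner_comm] using this

lemma fourier_comp_neg (f : ℝ → ℂ) (τ : ℝ) : 𝓕 (fun s => f (-s)) τ = 𝓕 f (-τ) := by
  rw [Real.fourier_eq', Real.fourier_eq',
    ← MeasureTheory.integral_neg_eq_self (fun v => Complex.exp ((↑(-2 * π * ⟪v, -τ⟫) * Complex.I)) • f v) volume]
  congr 1 with v
  norm_num [RCLike.inner_apply]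

lemma conj_fourierInv (G : ℝ → ℂ) (t : ℝ) :
    (starRingEnd ℂ) (𝓕⁻ G t) = 𝓕 (fun τ => (starRingEnd ℂ) (G τ)) t := by
  rw [Real.fourierInv_eq', Real.fourier_eq', ← integral_conj]
  congr 1 with v
  simp only [smul_eq_mul, map_mul]
  congr 1
  rw [← Complex.exp_conj]
  congr 1
  simp only [map_mul, Complex.conj_ofReal, Complex.conj_I, RCLike.inner_apply, conj_trivial,
    map_ofNat]
  push_cast
  ring

lemma fourier_real_neg (u : ℝ → ℝ) (τ : ℝ) :
    𝓕 (fun s => ((u s : ℝ) : ℂ)) (-τ) = (starRingEnd ℂ) (𝓕 (fun s => ((u s : ℝ) : ℂ)) τ) := by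
  rw [Real.fourier_eq', Real.fourier_eq', ← integral_conj]
  congr 1 with v
  simp only [smul_eq_mul, map_mul, Complex.conj_ofReal]
  congr 1
  rw [← Complex.exp_conj]
  congr 1
  simp only [map_mul, Complex.conj_ofReal, Complex.conj_I, RCLike.inner_apply, conj_trivial,
    map_ofNat]
  push_cast
  ring

lemma norm_f_le (f : ℝ → ℂ) (t : ℝ) : ‖𝓕 f t‖ ≤ ∫ τ : ℝ, ‖f τ‖ :=
  VectorFourier.norm_fourierIntegral_le_integral_norm _ _ _ _ _

lemma norm_finv_le (f : ℝ → ℂ) (t : ℝ) : ‖𝓕⁻ f t‖ ≤ ∫ τ : ℝ, ‖f τ‖ :=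
  VectorFourier.norm_fourierIntegral_le_integral_norm _ _ _ _ _

lemma continuous_f {f : ℝ → ℂ} (hf : Integrable f) : Continuous (𝓕 f) :=
  VectorFourier.fourierIntegral_continuous Real.continuous_fourierChar continuous_inner hf

lemma continuous_finv {f : ℝ → ℂ} (hf : Integrable f) : Continuous (𝓕⁻ f) := by
  have B : Continuous fun p : ℝ × ℝ => (-innerₗ ℝ) p.1 p.2 := continuous_inner.neg
  exact VectorFourier.fourierIntegral_continuous Real.continuous_fourierChar B hf

lemma MeasureTheory.Integrable.conj'' {f : ℝ → ℂ} (hf : Integrable f) :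
    Integrable (fun x => (starRingEnd ℂ) (f x)) :=
  hf.norm.mono (continuous_star.comp_aestronglyMeasurable hf.1)
    (ae_of_all _ fun x => by simp)

-- kernel mass
lemma kernel_mass {c : ℝ} (hc : 0 < c) (σ : ℝ) :
    ∫ τ : ℝ, (π * c) ^ ((1:ℝ)/2) * rexp (-π ^ 2 * c * (σ - τ) ^ 2) = 1 := by
  have hπc : 0 < π * c := by positivity
  rw [MeasureTheory.integral_const_mul]
  have h1 : ∫ τ : ℝ, rexp (-π ^ 2 * c * (σ - τ) ^ 2) = ∫ τ : ℝ, rexp (-(π ^ 2 * c) * τ ^ 2) := by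
    rw [← MeasureTheory.integral_add_right_eq_self
      (fun τ : ℝ => rexp (-(π ^ 2 * c) * τ ^ 2)) (-σ)]
    congr 1 with τ
    ring_nf
  rw [h1, integral_gaussian]
  have h2 : π / (π ^ 2 * c) = (π * c)⁻¹ := by
    field_simp
  rw [h2, Real.sqrt_inv, ← Real.sqrt_eq_rpow]
  field_simp

lemma fourier_mul_flip' {f g : ℝ → ℂ} (hf : Integrable f) (hg : Integrable g) :
    ∫ ξ : ℝ, 𝓕 f ξ * g ξ = ∫ x : ℝ, f x * 𝓕 g x := by
  have := VectorFourier.integral_fourierIntegral_smul_eq_flip (L := innerₗ ℝ)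
    Real.continuous_fourierChar continuous_inner hf hg
  simpa [smul_eq_mul, Real.fourier_eq, VectorFourier.fourierIntegral, real_inner_comm] using this

lemma finv_damped {g : ℝ → ℂ} (hgi : Integrable g) {c : ℝ} (hc : 0 < c) (σ : ℝ) :
    𝓕⁻ (fun t : ℝ => cexp (-(c:ℂ)⁻¹ * (t:ℂ)^2) * 𝓕 g t) σ
      = ∫ τ : ℝ, ((π * c : ℂ) ^ (Module.finrank ℝ ℝ / 2 : ℂ)
          * cexp (-π ^ 2 * c * ‖σ - τ‖ ^ 2)) * g τ := by
  have hcinv : (0:ℝ) < ((c:ℂ)⁻¹).re := by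
    rw [← Complex.ofReal_inv, Complex.ofReal_re]; exact inv_pos.2 hc
  have hcne : (c:ℂ) ≠ 0 := by exact_mod_cast ne_of_gt hc
  have J : Integrable (fun t : ℝ => cexp (-(c:ℂ)⁻¹ * ‖t‖^2 + 2 * π * I * ⟪σ, t⟫)) :=
    GaussianFourier.integrable_cexp_neg_mul_sq_norm_add hcinv _ _
  have step : 𝓕⁻ (fun t : ℝ => cexp (-(c:ℂ)⁻¹ * (t:ℂ)^2) * 𝓕 g t) σ
      = ∫ t : ℝ, cexp (-(c:ℂ)⁻¹ * ‖t‖^2 + 2 * π * I * ⟪σ, t⟫) * 𝓕 g t := by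
    rw [Real.fourierInv_eq']
    congr 1 with t
    simp only [smul_eq_mul]
    rw [← mul_assoc, ← Complex.exp_add]
    congr 1
    simp only [RCLike.inner_apply, conj_trivial, Real.norm_eq_abs]
    rw [show ((|t| : ℝ) : ℂ) ^ 2 = (t:ℂ)^2 by
      rw [← Complex.ofReal_pow, ← Complex.ofReal_pow]; exact congrArg _ (sq_abs t)]
    push_cast
    ring
  rw [step, ← fourier_mul_flip' J hgi]
  congr 1 with τ
  congr 1
  rw [fourier_gaussian_innerProductSpace' hcinv σ τ]
  congr 1
  · congr 1
    rw [div_eq_mul_inv, inv_inv]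
  · congr 1
    rw [div_eq_mul_inv, inv_inv]
    ring

lemma kernel_int_bound {g : ℝ → ℂ} (hgi : Integrable g) (hgc : Continuous g)
    {M : ℝ} (hM : ∀ τ, ‖g τ‖ ≤ M) {c : ℝ} (hc : 0 < c) (σ : ℝ) :
    ‖∫ τ : ℝ, ((π * c : ℂ) ^ (Module.finrank ℝ ℝ / 2 : ℂ)
        * cexp (-π ^ 2 * c * ‖σ - τ‖ ^ 2)) * g τ‖ ≤ M := by
  have hπc : (0:ℝ) < π * c := by positivity
  set K : ℝ → ℂ := fun τ => ((π * c : ℂ) ^ (Module.finrank ℝ ℝ / 2 : ℂ)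
        * cexp (-π ^ 2 * c * ‖σ - τ‖ ^ 2)) with hK
  have hexp : ∀ τ : ℝ, (-(π:ℂ) ^ 2 * c * (‖σ - τ‖ : ℂ) ^ 2)
      = (((-π ^ 2 * c * (σ - τ) ^ 2 : ℝ)) : ℂ) := by
    intro τ
    rw [show ((‖σ - τ‖ : ℝ) : ℂ) ^ 2 = (((σ - τ) ^ 2 : ℝ) : ℂ) by
      rw [← Complex.ofReal_pow, Real.norm_eq_abs]
      exact congrArg _ (sq_abs _)]
    push_cast
    ring
  have hfr : ((Module.finrank ℝ ℝ : ℂ) / 2) = (((1:ℝ)/2 : ℝ) : ℂ) := by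
    rw [Module.finrank_self]
    push_cast
    norm_num
  have hknorm : ∀ τ : ℝ, ‖K τ‖ = (π * c) ^ ((1:ℝ)/2) * rexp (-π ^ 2 * c * (σ - τ) ^ 2) := by
    intro τ
    rw [hK, norm_mul]
    congr 1
    · rw [show ((π * c : ℂ)) = (((π * c : ℝ)) : ℂ) by push_cast; ring, hfr,
        Complex.norm_cpow_eq_rpow_re_of_pos hπc, Complex.ofReal_re]
    · rw [hexp τ, ← Complex.ofReal_exp, Complex.norm_real,
        Real.norm_of_nonneg (Real.exp_pos _).le]
  have hKcont : Continuous K := by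
    apply continuous_const.mul
    exact Complex.continuous_exp.comp (by fun_prop)
  have hgauss : Integrable (fun τ : ℝ => rexp (-π ^ 2 * c * (σ - τ) ^ 2)) := by
    have base : Integrable (fun τ : ℝ => rexp (-(π ^ 2 * c) * τ ^ 2)) :=
      integrable_exp_neg_mul_sq (by positivity)
    refine (base.comp_sub_right σ).congr ?_
    filter_upwards with τ
    congr 1
    ring
  have hint1 : Integrable (fun τ => K τ * g τ) := by
    refine hgi.bdd_mul hKcont.aestronglyMeasurable (c := (π * c) ^ ((1:ℝ)/2)) (ae_of_all _ fun τ => ?_)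
    rw [hknorm τ]
    have h1 : rexp (-π ^ 2 * c * (σ - τ) ^ 2) ≤ 1 :=
      Real.exp_le_one_iff.2 (by
        simp only [neg_mul, Left.neg_nonpos_iff]; positivity)
    have h2 : (0:ℝ) ≤ (π * c) ^ ((1:ℝ)/2) := Real.rpow_nonneg (le_of_lt hπc) _
    nlinarith
  have hM0 : 0 ≤ M := le_trans (norm_nonneg _) (hM 0)
  calc ‖∫ τ : ℝ, K τ * g τ‖ ≤ ∫ τ : ℝ, ‖K τ * g τ‖ := norm_integral_le_integral_norm _
    _ ≤ ∫ τ : ℝ, ((π * c) ^ ((1:ℝ)/2) * rexp (-π ^ 2 * c * (σ - τ) ^ 2)) * M := by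
        apply integral_mono hint1.norm ((hgauss.const_mul _).mul_const M)
        intro τ
        dsimp only
        rw [norm_mul, hknorm τ]
        have h2 : (0:ℝ) ≤ (π * c) ^ ((1:ℝ)/2) * rexp (-π ^ 2 * c * (σ - τ) ^ 2) := by
          positivity
        exact mul_le_mul_of_nonneg_left (hM τ) h2
    _ = 1 * M := by rw [integral_mul_const, kernel_mass hc σ]
    _ = M := one_mul M

lemma damped_fubini {G : ℝ → ℂ} (hGi : Integrable G) (hGc : Continuous G)
    {c : ℝ} (hc : 0 < c) :
    ∫ t : ℝ, cexp (-(c:ℂ)⁻¹ * (t:ℂ)^2) * (𝓕⁻ G t * (starRingEnd ℂ) (𝓕⁻ G t))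
      = ∫ σ : ℝ, G σ * 𝓕⁻ (fun t : ℝ => cexp (-(c:ℂ)⁻¹ * (t:ℂ)^2)
          * 𝓕 (fun τ => (starRingEnd ℂ) (G τ)) t) σ := by
  set g : ℝ → ℂ := fun τ => (starRingEnd ℂ) (G τ) with hgdef
  have hgi : Integrable g := hGi.conj''
  have hFgc : Continuous (𝓕 g) := continuous_f hgi
  have hFgb : ∀ t : ℝ, ‖𝓕 g t‖ ≤ ∫ τ : ℝ, ‖g τ‖ := norm_f_le g
  set B : ℝ := ∫ τ : ℝ, ‖g τ‖ with hBdef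
  set F : ℝ → ℝ → ℂ := fun t σ =>
    cexp ((2 * π * (σ * t) : ℝ) * I) * (cexp (-(c:ℂ)⁻¹ * (t:ℂ)^2) * 𝓕 g t * G σ) with hFdef
  have habs1 : ∀ r : ℝ, ‖cexp ((r : ℝ) * I)‖ = 1 := fun r => by
    exact Complex.norm_exp_ofReal_mul_I r
  have habs2 : ∀ t : ℝ, ‖cexp (-(c:ℂ)⁻¹ * (t:ℂ)^2)‖ = rexp (-c⁻¹ * t^2) := fun t => by
    rw [show (-(c:ℂ)⁻¹ * (t:ℂ)^2) = ((-c⁻¹ * t^2 : ℝ) : ℂ) by push_cast; ring,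
      ← Complex.ofReal_exp, Complex.norm_real,
      Real.norm_of_nonneg (Real.exp_pos _).le]
  have hFint : Integrable (Function.uncurry F) ((volume : Measure ℝ).prod volume) := by
    have hdom : Integrable (fun p : ℝ × ℝ => (rexp (-c⁻¹ * p.1^2) * B) * ‖G p.2‖)
        ((volume : Measure ℝ).prod volume) :=
      ((integrable_exp_neg_mul_sq (inv_pos.2 hc)).mul_const B).mul_prod hGi.norm
    have hcont : Continuous (Function.uncurry F) := by
      apply Continuous.mul
      · exact Complex.continuous_exp.comp (by fun_prop)
      · apply Continuous.mul
        · apply Continuous.mul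
          · exact Complex.continuous_exp.comp (by fun_prop)
          · exact hFgc.comp continuous_fst
        · exact hGc.comp continuous_snd
    have hB0 : (0:ℝ) ≤ B := integral_nonneg (fun τ => norm_nonneg _)
    refine hdom.mono hcont.aestronglyMeasurable (ae_of_all _ fun p => ?_)
    have : ‖Function.uncurry F p‖ = rexp (-c⁻¹ * p.1^2) * ‖𝓕 g p.1‖ * ‖G p.2‖ := by
      simp only [Function.uncurry, hFdef, norm_mul, habs1, habs2, one_mul]
    rw [this]
    have h1 : ‖𝓕 g p.1‖ ≤ B := hFgb p.1
    have h2 : (0:ℝ) ≤ rexp (-c⁻¹ * p.1^2) := (Real.exp_pos _).le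
    have h3 : (0:ℝ) ≤ ‖G p.2‖ := norm_nonneg _
    have h4 : (0:ℝ) ≤ rexp (-c⁻¹ * p.1 ^ 2) * B * ‖G p.2‖ := mul_nonneg (mul_nonneg h2 hB0) h3
    rw [Real.norm_of_nonneg h4]
    exact mul_le_mul_of_nonneg_right (mul_le_mul_of_nonneg_left h1 h2) h3
  calc ∫ t : ℝ, cexp (-(c:ℂ)⁻¹ * (t:ℂ)^2) * (𝓕⁻ G t * (starRingEnd ℂ) (𝓕⁻ G t))
      = ∫ t : ℝ, ∫ σ : ℝ, F t σ := by
        congr 1 with t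
        rw [conj_fourierInv, Real.fourierInv_eq']
        rw [show (∫ v : ℝ, cexp ((2 * π * ⟪v, t⟫ : ℝ) * I) • G v) * 𝓕 g t
            = ∫ v : ℝ, (cexp ((2 * π * ⟪v, t⟫ : ℝ) * I) • G v) * 𝓕 g t from
          (integral_mul_const _ _).symm, ← integral_const_mul]
        congr 1 with σ
        simp only [hFdef, smul_eq_mul, RCLike.inner_apply, conj_trivial]
        ring
    _ = ∫ σ : ℝ, ∫ t : ℝ, F t σ := integral_integral_swap hFint
    _ = ∫ σ : ℝ, G σ * 𝓕⁻ (fun t : ℝ => cexp (-(c:ℂ)⁻¹ * (t:ℂ)^2) * 𝓕 g t) σ := by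
        congr 1 with σ
        rw [Real.fourierInv_eq', ← integral_const_mul]
        congr 1 with t
        simp only [hFdef, smul_eq_mul, RCLike.inner_apply, conj_trivial]
        ring

lemma plancherel_special {G : ℝ → ℂ} (hGi : Integrable G) (hGc : Continuous G)
    {M : ℝ} (hM : ∀ τ, ‖G τ‖ ≤ M) :
    ∫ t : ℝ, ‖𝓕⁻ G t‖ ^ 2 = ∫ τ : ℝ, ‖G τ‖ ^ 2 := by
  set g : ℝ → ℂ := fun τ => (starRingEnd ℂ) (G τ) with hgdef
  have hgi : Integrable g := hGi.conj''
  have hgc : Continuous g := continuous_star.comp hGc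
  have hgM : ∀ τ, ‖g τ‖ ≤ M := fun τ => by simpa [hgdef] using hM τ
  set h : ℝ → ℂ := 𝓕⁻ G with hhdef
  have hhc : Continuous h := continuous_finv hGi
  set B2 : ℝ := ∫ τ : ℝ, ‖G τ‖ with hB2
  have hhb : ∀ t, ‖h t‖ ≤ B2 := norm_finv_le G
  -- damped integrals are eventually equal to kernel-convolved integrals
  set u : ℝ → ℝ → ℂ := fun c t => cexp (-(c:ℂ)⁻¹ * (t:ℂ)^2) * 𝓕 g t with hudef
  have hui : ∀ c : ℝ, 0 < c → Integrable (u c) := by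
    intro c hc
    have hFgb : ∀ t : ℝ, ‖𝓕 g t‖ ≤ ∫ τ : ℝ, ‖g τ‖ := norm_f_le g
    have habs2 : ∀ t : ℝ, ‖cexp (-(c:ℂ)⁻¹ * (t:ℂ)^2)‖ = rexp (-c⁻¹ * t^2) := fun t => by
      rw [show (-(c:ℂ)⁻¹ * (t:ℂ)^2) = ((-c⁻¹ * t^2 : ℝ) : ℂ) by push_cast; ring,
        ← Complex.ofReal_exp, Complex.norm_real,
        Real.norm_of_nonneg (Real.exp_pos _).le]
    refine ((integrable_exp_neg_mul_sq (inv_pos.2 hc)).mul_const (∫ τ : ℝ, ‖g τ‖)).mono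
      ?_ (ae_of_all _ fun t => ?_)
    · exact ((Complex.continuous_exp.comp (by fun_prop)).mul (continuous_f hgi)).aestronglyMeasurable
    · have hg0 : (0:ℝ) ≤ ∫ τ : ℝ, ‖g τ‖ := integral_nonneg fun τ => norm_nonneg _
      have h2 : (0:ℝ) ≤ rexp (-c⁻¹ * t^2) := (Real.exp_pos _).le
      rw [norm_mul, habs2, Real.norm_of_nonneg (mul_nonneg h2 hg0)]
      exact mul_le_mul_of_nonneg_left (hFgb t) h2
  -- the main limit statement
  have key : Tendsto (fun c : ℝ => ∫ t : ℝ, cexp (-(c:ℂ)⁻¹ * (t:ℂ)^2) * (h t * (starRingEnd ℂ) (h t)))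
      atTop (𝓝 (∫ σ : ℝ, G σ * g σ)) := by
    have main : Tendsto (fun c : ℝ => ∫ σ : ℝ, G σ * 𝓕⁻ (u c) σ)
        atTop (𝓝 (∫ σ : ℝ, G σ * g σ)) := by
      apply tendsto_integral_filter_of_dominated_convergence (fun σ => ‖G σ‖ * M)
      · filter_upwards [Ioi_mem_atTop (0:ℝ)] with c (hc : 0 < c)
        exact (hGc.mul (continuous_finv (hui c hc))).aestronglyMeasurable
      · filter_upwards [Ioi_mem_atTop (0:ℝ)] with c (hc : 0 < c)
        filter_upwards with σ
        rw [norm_mul, hudef]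
        apply mul_le_mul_of_nonneg_left _ (norm_nonneg (G σ))
        rw [finv_damped hgi hc σ]
        exact kernel_int_bound hgi hgc hgM hc σ
      · exact hGi.norm.mul_const M
      · filter_upwards with σ
        have hlim : Tendsto (fun c : ℝ => 𝓕⁻ (u c) σ) atTop (𝓝 (g σ)) := by
          have base := Real.tendsto_integral_gaussian_smul' (f := g) (v := σ) hgi
            (hgc.continuousAt)
          have base' : Tendsto (fun c : ℝ => ∫ τ : ℝ,
              ((π * c : ℂ) ^ (Module.finrank ℝ ℝ / 2 : ℂ)
                * cexp (-π ^ 2 * c * ‖σ - τ‖ ^ 2)) * g τ) atTop (𝓝 (g σ)) := by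
            simpa [smul_eq_mul] using base
          apply base'.congr'
          filter_upwards [Ioi_mem_atTop (0:ℝ)] with c (hc : 0 < c)
          exact (finv_damped hgi hc σ).symm
        exact hlim.const_mul (G σ)
    apply main.congr'
    filter_upwards [Ioi_mem_atTop (0:ℝ)] with c (hc : 0 < c)
    exact (damped_fubini hGi hGc hc).symm
  -- identify the limit with the real integral of ‖G‖²
  have hlimval : (∫ σ : ℝ, G σ * g σ) = ((∫ τ : ℝ, ‖G τ‖ ^ 2 : ℝ) : ℂ) :=
    calc (∫ σ : ℝ, G σ * g σ) = ∫ σ : ℝ, ((‖G σ‖ ^ 2 : ℝ) : ℂ) := by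
          congr 1 with σ
          rw [hgdef]
          rw [Complex.mul_conj, Complex.normSq_eq_norm_sq]
      _ = ((∫ τ : ℝ, ‖G τ‖ ^ 2 : ℝ) : ℂ) := integral_ofReal
  -- real form of the damped integrals
  set Ir : ℝ → ℝ := fun c => ∫ t : ℝ, rexp (-c⁻¹ * t^2) * ‖h t‖^2 with hIrdef
  have hIr : ∀ c : ℝ, ((Ir c : ℝ) : ℂ)
      = ∫ t : ℝ, cexp (-(c:ℂ)⁻¹ * (t:ℂ)^2) * (h t * (starRingEnd ℂ) (h t)) := by
    intro c
    rw [hIrdef]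
    calc ((∫ t : ℝ, rexp (-c⁻¹ * t^2) * ‖h t‖^2 : ℝ) : ℂ)
        = ∫ t : ℝ, ((rexp (-c⁻¹ * t^2) * ‖h t‖^2 : ℝ) : ℂ) := integral_ofReal.symm
      _ = ∫ t : ℝ, cexp (-(c:ℂ)⁻¹ * (t:ℂ)^2) * (h t * (starRingEnd ℂ) (h t)) := by
          congr 1 with t
          rw [Complex.mul_conj, Complex.normSq_eq_norm_sq,
            show (-(c:ℂ)⁻¹ * (t:ℂ)^2) = ((-c⁻¹ * t^2 : ℝ) : ℂ) by push_cast; ring,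
            ← Complex.ofReal_exp]
          norm_num
  set R : ℝ := ∫ τ : ℝ, ‖G τ‖ ^ 2 with hR
  have hR0 : 0 ≤ R := integral_nonneg fun τ => sq_nonneg _
  have hIrlim : Tendsto Ir atTop (𝓝 R) := by
    have h1 : Tendsto (fun c => ((Ir c : ℝ) : ℂ)) atTop (𝓝 ((R : ℝ) : ℂ)) := by
      rw [hR, ← hlimval]
      exact key.congr' (by filter_upwards with c using (hIr c).symm)
    have h2 := (Complex.continuous_re.tendsto _).comp h1
    simpa [Function.comp_def] using h2
  -- Monotone convergence
  have hB20 : 0 ≤ B2 := integral_nonneg fun τ => norm_nonneg _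
  have hseq : Tendsto (fun n : ℕ => ((n : ℝ) + 1)) atTop atTop :=
    tendsto_atTop_add_const_right _ 1 tendsto_natCast_atTop_atTop
  have hIrseq : Tendsto (fun n : ℕ => Ir ((n : ℝ) + 1)) atTop (𝓝 R) := hIrlim.comp hseq
  have hmeas : ∀ n : ℕ, AEMeasurable
      (fun t : ℝ => ENNReal.ofReal (rexp (-((n:ℝ)+1)⁻¹ * t^2) * ‖h t‖^2)) volume := by
    intro n
    apply Measurable.aemeasurable
    apply Measurable.ennreal_ofReal
    exact ((Real.continuous_exp.comp (by fun_prop)).mul ((hhc.norm).pow 2)).measurable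
  have hmono : ∀ t : ℝ, Monotone (fun n : ℕ =>
      ENNReal.ofReal (rexp (-((n:ℝ)+1)⁻¹ * t^2) * ‖h t‖^2)) := by
    intro t m n hmn
    apply ENNReal.ofReal_le_ofReal
    apply mul_le_mul_of_nonneg_right _ (sq_nonneg _)
    apply Real.exp_le_exp.2
    have hmpos : (0:ℝ) < (m:ℝ) + 1 := by positivity
    have hle : ((n:ℝ)+1)⁻¹ ≤ ((m:ℝ)+1)⁻¹ := by
      apply inv_anti₀ hmpos
      exact add_le_add_left (Nat.cast_le.2 hmn) 1
    nlinarith [sq_nonneg t]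
  have htend : ∀ t : ℝ, Tendsto (fun n : ℕ =>
      ENNReal.ofReal (rexp (-((n:ℝ)+1)⁻¹ * t^2) * ‖h t‖^2)) atTop
      (𝓝 (ENNReal.ofReal (‖h t‖^2))) := by
    intro t
    apply (ENNReal.continuous_ofReal.tendsto _).comp
    have l1 : Tendsto (fun n : ℕ => ((n:ℝ)+1)⁻¹) atTop (𝓝 0) := hseq.inv_tendsto_atTop
    have l2 : Tendsto (fun n : ℕ => -((n:ℝ)+1)⁻¹ * t^2) atTop (𝓝 (-0 * t^2)) :=
      (l1.neg).mul_const _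
    have l3 := ((Real.continuous_exp.tendsto _).comp l2).mul_const (‖h t‖^2)
    simpa using l3
  have hmct := lintegral_tendsto_of_tendsto_of_monotone hmeas
    (ae_of_all _ hmono) (ae_of_all _ htend)
  have hofReal : ∀ n : ℕ, (∫⁻ t : ℝ, ENNReal.ofReal (rexp (-((n:ℝ)+1)⁻¹ * t^2) * ‖h t‖^2))
      = ENNReal.ofReal (Ir ((n:ℝ)+1)) := by
    intro n
    have hpos : (0:ℝ) < ((n:ℝ)+1)⁻¹ := by positivity
    have hint : Integrable (fun t : ℝ => rexp (-((n:ℝ)+1)⁻¹ * t^2) * ‖h t‖^2) := by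
      refine ((integrable_exp_neg_mul_sq hpos).mul_const (B2^2)).mono
        ?_ (ae_of_all _ fun t => ?_)
      · exact ((Real.continuous_exp.comp (by fun_prop)).mul
          ((hhc.norm).pow 2)).aestronglyMeasurable
      · have h2 : (0:ℝ) ≤ rexp (-((n:ℝ)+1)⁻¹ * t^2) := (Real.exp_pos _).le
        rw [Real.norm_of_nonneg (mul_nonneg h2 (sq_nonneg _)),
          Real.norm_of_nonneg (mul_nonneg h2 (by positivity))]
        have := hhb t
        have h5 : ‖h t‖^2 ≤ B2^2 := by nlinarith [norm_nonneg (h t)]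
        exact mul_le_mul_of_nonneg_left h5 h2
    rw [hIrdef, ← ofReal_integral_eq_lintegral_ofReal hint
      (ae_of_all _ fun t => mul_nonneg (Real.exp_pos _).le (sq_nonneg _))]
  have hmct' : Tendsto (fun n : ℕ => ENNReal.ofReal (Ir ((n:ℝ)+1))) atTop
      (𝓝 (∫⁻ t : ℝ, ENNReal.ofReal (‖h t‖^2))) := by
    refine hmct.congr fun n => hofReal n
  have huniq : (∫⁻ t : ℝ, ENNReal.ofReal (‖h t‖^2)) = ENNReal.ofReal R :=
    tendsto_nhds_unique hmct' (ENNReal.tendsto_ofReal hIrseq)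
  rw [integral_eq_lintegral_of_nonneg_ae (ae_of_all _ fun t => sq_nonneg _)
    ((hhc.norm.pow 2).aestronglyMeasurable), huniq, ENNReal.toReal_ofReal hR0]

/-- complexification of a real Schwartz function -/
noncomputable def cplx (w : SchwartzMap ℝ ℝ) : SchwartzMap ℝ ℂ :=
  SchwartzMap.bilinLeftCLM (ContinuousLinearMap.lsmul ℝ ℝ)
    (Function.HasTemperateGrowth.const (1 : ℂ)) w

lemma cplx_apply (w : SchwartzMap ℝ ℝ) (x : ℝ) : cplx w x = ((w x : ℝ) : ℂ) := by
  show (ContinuousLinearMap.lsmul ℝ ℝ) (w x) (1 : ℂ) = _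
  simp [Complex.real_smul]

lemma cplx_coe (w : SchwartzMap ℝ ℝ) : ⇑(cplx w) = fun s : ℝ => ((w s : ℝ) : ℂ) := funext (cplx_apply w)

lemma deriv_cplx (w : SchwartzMap ℝ ℝ) (t : ℝ) :
    deriv (fun s : ℝ => ((w s : ℝ) : ℂ)) t = ((deriv (fun s : ℝ => w s) t : ℝ) : ℂ) :=
  ((w.differentiable.differentiableAt).hasDerivAt.ofReal_comp).deriv

/-- the Fourier transform of the complexification, as a Schwartz map -/
noncomputable def ftw (w : SchwartzMap ℝ ℝ) : SchwartzMap ℝ ℂ :=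
  SchwartzMap.fourierTransformCLM ℝ (cplx w)

lemma ftw_coe (w : SchwartzMap ℝ ℝ) : ⇑(ftw w) = 𝓕 (fun s : ℝ => ((w s : ℝ) : ℂ)) := by
  rw [ftw, SchwartzMap.fourierTransformCLM_apply, SchwartzMap.fourier_coe, cplx_coe]

/-- bound on a Schwartz function times (1+‖x‖) -/
lemma schwartz_bd (φ : SchwartzMap ℝ ℂ) : ∃ M : ℝ, 0 ≤ M ∧
    ∀ x : ℝ, (1 + ‖x‖) * ‖φ x‖ ≤ M := by
  obtain ⟨C0, hC0p, hC0⟩ := φ.decay 0 0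
  obtain ⟨C1, hC1p, hC1⟩ := φ.decay 1 0
  refine ⟨C0 + C1, by positivity, fun x => ?_⟩
  have h0 := hC0 x; have h1 := hC1 x
  simp only [pow_zero, one_mul, norm_iteratedFDeriv_zero, pow_one] at h0 h1
  nlinarith [norm_nonneg (φ x), norm_nonneg x]

lemma sqrt_abs_le (x : ℝ) : Real.sqrt |x| ≤ 1 + ‖x‖ := by
  have h1 : Real.sqrt |x| ≤ 1 + |x| := by
    rcases le_total (|x|) 1 with h | h
    · have : Real.sqrt |x| ≤ 1 := by
        rw [show (1:ℝ) = Real.sqrt 1 by simp]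
        exact Real.sqrt_le_sqrt h
      linarith [abs_nonneg x]
    · have : Real.sqrt |x| ≤ |x| := by
        nlinarith [Real.sq_sqrt (abs_nonneg x), Real.sqrt_nonneg |x|,
          Real.sqrt_le_sqrt h, Real.sqrt_one]
      linarith
  simpa [Real.norm_eq_abs] using h1

open MeasureTheory
open scoped FourierTransform

/-- Half-order time derivative: `D^{1/2}g = 𝓕⁻¹(τ ↦ |τ|^{1/2}·𝓕g(τ))`. -/
noncomputable def halfDeriv (g : ℝ → ℂ) : ℝ → ℂ :=
  𝓕⁻ (fun τ : ℝ => ((Real.sqrt |τ| : ℝ) : ℂ) * 𝓕 g τ)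

/-- Hilbert transform: `Hg = 𝓕⁻¹(τ ↦ i·sign(τ)·𝓕g(τ))`. -/
noncomputable def hilbertT (g : ℝ → ℂ) : ℝ → ℂ :=
  𝓕⁻ (fun τ : ℝ => Complex.I * ((Real.sign τ : ℝ) : ℂ) * 𝓕 g τ)

section MainProof
open Filter Complex Real SchwartzMap
open scoped Topology RealInnerProductSpace

lemma real_sign_mul (τ : ℝ) : τ * Real.sign τ = |τ| := by
  rcases lt_trichotomy τ 0 with h | h | h
  · rw [Real.sign_of_neg h, abs_of_neg h]; ring
  · simp [h]
  · rw [Real.sign_of_pos h, abs_of_pos h]; ring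

lemma measurable_real_sign : Measurable Real.sign := by
  have h : Real.sign = fun r : ℝ => if r < 0 then (-1:ℝ) else if 0 < r then 1 else 0 :=
    funext fun r => rfl
  rw [h]
  refine Measurable.ite (measurableSet_lt measurable_id measurable_const) measurable_const ?_
  exact Measurable.ite (measurableSet_lt measurable_const measurable_id)
    measurable_const measurable_const

theorem deriv_mul_hilbert_integral (w : SchwartzMap ℝ ℝ) :
    (∫ t : ℝ, ((deriv (fun s : ℝ => w s) t : ℝ) : ℂ)
        * hilbertT (fun s => ((w s : ℝ) : ℂ)) t)
      = ((2 * Real.pi * ∫ τ : ℝ, |τ| * ‖𝓕 (fun s => ((w s : ℝ) : ℂ)) τ‖ ^ 2 : ℝ) : ℂ)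
    ∧ (∫ t : ℝ, ((deriv (fun s : ℝ => w s) t : ℝ) : ℂ)
        * hilbertT (fun s => ((w s : ℝ) : ℂ)) t)
      = ((2 * Real.pi * ∫ t : ℝ, ‖halfDeriv (fun s => ((w s : ℝ) : ℂ)) t‖ ^ 2 : ℝ) : ℂ)
    ∧ 0 ≤ (∫ t : ℝ, ((deriv (fun s : ℝ => w s) t : ℝ) : ℂ)
        * hilbertT (fun s => ((w s : ℝ) : ℂ)) t).re := by
  set f : ℝ → ℂ := fun s => ((w s : ℝ) : ℂ) with hf
  have hfc : ⇑(cplx w) = f := cplx_coe w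
  set φ : ℝ → ℂ := 𝓕 f with hφ
  have hφs : ⇑(ftw w) = φ := ftw_coe w
  have hφi : Integrable φ := by rw [← hφs]; exact (ftw w).integrable
  have hφc : Continuous φ := by rw [← hφs]; exact (ftw w).continuous
  have hφ1 : Integrable (fun τ : ℝ => ‖τ‖ * ‖φ τ‖) := by
    have := (ftw w).integrable_pow_mul volume 1
    rw [hφs] at this
    simpa using this
  obtain ⟨M, hM0, hMb⟩ := schwartz_bd (ftw w)
  rw [hφs] at hMb
  have hfi : Integrable f := by rw [← hfc]; exact (cplx w).integrable
  have hfd : Differentiable ℝ f := by rw [← hfc]; exact (cplx w).differentiable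
  have hd2 : deriv f = fun t : ℝ => ((deriv (fun s : ℝ => w s) t : ℝ) : ℂ) :=
    funext fun t => by rw [hf, deriv_cplx w t]
  have hdint : Integrable (deriv f) := by
    rw [hd2]
    have h1 : Integrable (fun t : ℝ => ((SchwartzMap.derivCLM ℝ ℝ w) t : ℂ)) :=
      (SchwartzMap.derivCLM ℝ ℝ w).integrable.ofReal
    refine h1.congr (ae_of_all _ fun t => ?_)
    simp [SchwartzMap.derivCLM_apply]
  -- the G function
  set G : ℝ → ℂ := fun τ => ((Real.sqrt |τ| : ℝ) : ℂ) * φ τ with hG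
  have hGnorm : ∀ τ : ℝ, ‖G τ‖ = Real.sqrt |τ| * ‖φ τ‖ := fun τ => by
    rw [hG, norm_mul, Complex.norm_real, Real.norm_of_nonneg (Real.sqrt_nonneg _)]
  have hGc : Continuous G :=
    (Complex.continuous_ofReal.comp (Real.continuous_sqrt.comp _root_.continuous_abs)).mul hφc
  have hGi : Integrable G := by
    refine (hφi.norm.add hφ1).mono hGc.aestronglyMeasurable (ae_of_all _ fun τ => ?_)
    rw [hGnorm τ]
    simp only [Pi.add_apply]
    have h1 := sqrt_abs_le τ
    have h2 : (0:ℝ) ≤ ‖φ τ‖ := norm_nonneg _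
    have h3 : (0:ℝ) ≤ ‖τ‖ * ‖φ τ‖ := mul_nonneg (norm_nonneg _) h2
    rw [Real.norm_of_nonneg (by positivity)]
    nlinarith [Real.sqrt_nonneg |τ|]
  have hGM : ∀ τ : ℝ, ‖G τ‖ ≤ M := fun τ => by
    rw [hGnorm τ]
    calc Real.sqrt |τ| * ‖φ τ‖ ≤ (1 + ‖τ‖) * ‖φ τ‖ :=
          mul_le_mul_of_nonneg_right (sqrt_abs_le τ) (norm_nonneg _)
      _ ≤ M := hMb τ
  have hGsq : ∀ τ : ℝ, ‖G τ‖ ^ 2 = |τ| * ‖φ τ‖ ^ 2 := fun τ => by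
    rw [hGnorm τ, mul_pow, Real.sq_sqrt (abs_nonneg τ)]
  -- Plancherel part
  have hplan : ∫ t : ℝ, ‖halfDeriv f t‖ ^ 2 = ∫ τ : ℝ, |τ| * ‖φ τ‖ ^ 2 := by
    have h1 : halfDeriv f = 𝓕⁻ G := by
      unfold halfDeriv
      rw [hG, hφ]
    rw [h1, plancherel_special hGi hGc hGM]
    congr 1 with τ
    exact hGsq τ
  -- Part 1
  have e1 : (∫ t : ℝ, ((deriv (fun s : ℝ => w s) t : ℝ) : ℂ) * hilbertT f t)
      = ((2 * π * ∫ τ : ℝ, |τ| * ‖φ τ‖ ^ 2 : ℝ) : ℂ) := by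
    set F : ℝ → ℂ := fun τ => Complex.I * ((Real.sign τ : ℝ) : ℂ) * φ τ with hF
    have hFeq : hilbertT f = 𝓕⁻ F := by
      unfold hilbertT
      rw [hF, hφ]
    have hFi : Integrable F := by
      refine hφi.mono ?_ (ae_of_all _ fun τ => ?_)
      · exact (((Complex.measurable_ofReal.comp measurable_real_sign).const_mul
          Complex.I).mul hφc.measurable).aestronglyMeasurable
      · rw [hF]
        simp only [norm_mul, Complex.norm_I, one_mul, Complex.norm_real]
        rcases lt_trichotomy τ 0 with h | h | h <;>
          simp [Real.sign_of_neg, Real.sign_of_pos, h] <;> positivity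
    have huint : Integrable (fun s : ℝ => deriv f (-s)) := by
      have : (fun s : ℝ => deriv f (-s)) = (deriv f) ∘ (fun s : ℝ => -s) := rfl
      rw [this]
      exact ((Measure.measurePreserving_neg (volume : Measure ℝ)).integrable_comp_emb
        (Homeomorph.neg ℝ).measurableEmbedding).2 hdint
    have hFd : 𝓕 (deriv f) = fun x : ℝ => (2 * π * Complex.I * x) • 𝓕 f x :=
      Real.fourier_deriv hfi hfd hdint
    calc (∫ t : ℝ, ((deriv (fun s : ℝ => w s) t : ℝ) : ℂ) * hilbertT f t)
        = ∫ t : ℝ, deriv f t * 𝓕 F (-t) := by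
          rw [hFeq]
          congr 1 with t
          rw [hd2, Real.fourierInv_eq_fourier_neg]
      _ = ∫ s : ℝ, deriv f (-s) * 𝓕 F s := by
          rw [← MeasureTheory.integral_neg_eq_self
            (fun s : ℝ => deriv f (-s) * 𝓕 F s) volume]
          simp only [neg_neg]
      _ = ∫ s : ℝ, 𝓕 F s * deriv f (-s) := by
          congr 1 with s
          ring
      _ = ∫ x : ℝ, F x * 𝓕 (fun s : ℝ => deriv f (-s)) x := fourier_mul_flip' hFi huint
      _ = ∫ x : ℝ, ((2 * π * (|x| * ‖φ x‖ ^ 2) : ℝ) : ℂ) := by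
          congr 1 with τ
          rw [fourier_comp_neg (deriv f) τ, hFd]
          have hfneg : 𝓕 f (-τ) = (starRingEnd ℂ) (φ τ) := by
            rw [hφ, hf]
            exact fourier_real_neg (fun s => w s) τ
          have hmc : φ τ * (starRingEnd ℂ) (φ τ) = ((‖φ τ‖ ^ 2 : ℝ) : ℂ) := by
            rw [Complex.mul_conj, Complex.normSq_eq_norm_sq]
          simp only [smul_eq_mul]
          rw [hF]
          calc Complex.I * ((Real.sign τ : ℝ) : ℂ) * φ τ
                * (2 * π * Complex.I * ((-τ : ℝ) : ℂ) * 𝓕 f (-τ))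
              = (Complex.I * Complex.I) * (((Real.sign τ : ℝ) : ℂ) * ((-τ : ℝ) : ℂ)
                  * (2 * π) * (φ τ * 𝓕 f (-τ))) := by push_cast; ring
            _ = ((2 * π * (|τ| * ‖φ τ‖ ^ 2) : ℝ) : ℂ) := by
                rw [Complex.I_mul_I, hfneg, hmc, ← real_sign_mul τ]
                push_cast
                ring
      _ = ((∫ x : ℝ, 2 * π * (|x| * ‖φ x‖ ^ 2) : ℝ) : ℂ) :=
          integral_ofReal (𝕜 := ℂ) (f := fun x : ℝ => 2 * π * (|x| * ‖φ x‖ ^ 2))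
      _ = ((2 * π * ∫ τ : ℝ, |τ| * ‖φ τ‖ ^ 2 : ℝ) : ℂ) := by
          rw [MeasureTheory.integral_const_mul]
  have hnn : (0:ℝ) ≤ 2 * π * ∫ τ : ℝ, |τ| * ‖φ τ‖ ^ 2 := by
    apply mul_nonneg (by positivity)
    exact integral_nonneg fun τ => mul_nonneg (abs_nonneg _) (sq_nonneg _)
  refine ⟨e1, ?_, ?_⟩
  · rw [e1, hplan]
  · rw [e1]
    simpa using hnn

end MainProof
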